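/- Let F ⊆ ℝ^n be a nonempty convex polyhedron and let U, V ⊆ ℝ^n be polyhedra. Let W ⊆ ℝ^n be a finite union of convex polyhedra such that U ⊆ W and, for all convex polyhedra P ⊆ ℝ^n \ V and Q ⊆ W, P ∩ preflow_F(bound(P, Q) ∩ preflow_F(Q)) ⊆ W. Then rwa_F(U, V) ⊆ W. -/

import Mathlib

open Set

/-- Points of `ℝ^n`. -/
abbrev Vec (n : ℕ) := Fin n → ℝ

/-- A (strict or non-strict) affine half-space of `ℝ^ι`. -/
def IsHalfspace {ι : Type} [Fintype ι] (H : Set (ι → ℝ)) : Prop :=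
  ∃ (a : ι → ℝ) (b : ℝ), H = {x | (∑ i, a i * x i) < b} ∨ H = {x | (∑ i, a i * x i) ≤ b}

/-- A convex polyhedron: a finite intersection of half-spaces. -/
def IsConvexPolyhedron {ι : Type} [Fintype ι] (P : Set (ι → ℝ)) : Prop :=
  ∃ (k : ℕ) (Hs : Fin k → Set (ι → ℝ)), (∀ i, IsHalfspace (Hs i)) ∧ P = ⋂ i, Hs i

/-- A polyhedron: a finite union of convex polyhedra. -/
def IsPolyhedron {ι : Type} [Fintype ι] (G : Set (ι → ℝ)) : Prop :=
  ∃ (k : ℕ) (Ps : Fin k → Set (ι → ℝ)), (∀ i, IsConvexPolyhedron (Ps i)) ∧ G = ⋃ i, Ps i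

/-- The pre-flow of `G` with respect to `F`:
`preflow_F(G) = {u | ∃ δ ≥ 0, ∃ c ∈ F, u + δ·c ∈ G}`. -/
def preflow {n : ℕ} (F G : Set (Vec n)) : Set (Vec n) :=
  {u | ∃ δ : ℝ, 0 ≤ δ ∧ ∃ c ∈ F, u + δ • c ∈ G}

/-- The boundary of two sets: `bound(G, G') = (closure G ∩ G') ∪ (G ∩ closure G')`. -/
def bnd {n : ℕ} (G G' : Set (Vec n)) : Set (Vec n) :=
  (closure G ∩ G') ∪ (G ∩ closure G')

/-- `prwa_F(U, V)`: the points from which a piecewise straight-line trajectory with slopes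
in `F` reaches `U`, every point along the way (except possibly the final one) lying in
`(ℝ^n \ V) ∪ U`. -/
def prwa {n : ℕ} (F U V : Set (Vec n)) : Set (Vec n) :=
  {u | ∃ (k : ℕ) (d : Fin k → ℝ) (c : Fin k → Vec n) (p : Fin (k + 1) → Vec n),
    (∀ i, 0 ≤ d i) ∧ (∀ i, c i ∈ F) ∧ p 0 = u ∧
    (∀ i : Fin k, p i.succ = p i.castSucc + d i • c i) ∧
    p (Fin.last k) ∈ U ∧
    ∀ (i : Fin k) (t : ℝ), 0 ≤ t → t ≤ d i →
      p i.castSucc + t • c i = p (Fin.last k) ∨ p i.castSucc + t • c i ∈ Vᶜ ∪ U}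

/-- `rwa_F(U, V)`: the points from which some differentiable trajectory with derivative in
`F` may reach `U` while staying in `(ℝ^n \ V) ∪ U` beforehand. -/
def rwaSet {n : ℕ} (F U V : Set (Vec n)) : Set (Vec n) :=
  {u | ∃ f : ℝ → Vec n, Differentiable ℝ f ∧ f 0 = u ∧ (∀ t, 0 ≤ t → deriv f t ∈ F) ∧
    ∃ δ : ℝ, 0 ≤ δ ∧ f δ ∈ U ∧ ∀ δ', 0 ≤ δ' → δ' < δ → f δ' ∈ Vᶜ ∪ U}

/-- The complement of a half-space is a half-space. -/
lemma isHalfspace_compl {ι : Type} [Fintype ι] {H : Set (ι → ℝ)} (h : IsHalfspace H) :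
    IsHalfspace Hᶜ := by
  obtain ⟨a, b, h | h⟩ := h
  · refine ⟨fun i => -a i, -b, Or.inr ?_⟩
    ext x
    simp [h, neg_mul, Finset.sum_neg_distrib, not_lt, neg_le_neg_iff]
  · refine ⟨fun i => -a i, -b, Or.inl ?_⟩
    ext x
    simp [h, neg_mul, Finset.sum_neg_distrib, not_le, neg_lt_neg_iff]

/-- A finite intersection of half-spaces (over any finite index type) is a convex
polyhedron. -/
lemma isConvexPolyhedron_iInter {ι : Type} [Fintype ι] {J : Type} [Fintype J]
    (Hs : J → Set (ι → ℝ)) (h : ∀ j, IsHalfspace (Hs j)) :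
    IsConvexPolyhedron (⋂ j, Hs j) := by
  refine ⟨Fintype.card J, Hs ∘ (Fintype.equivFin J).symm, fun i => h _, ?_⟩
  ext x
  simp only [mem_iInter, Function.comp]
  constructor
  · intro hx i; exact hx _
  · intro hx j; simpa using hx (Fintype.equivFin J j)

/-- A polyhedron is determined by a finite family of half-spaces: membership only
depends on the membership pattern with respect to those half-spaces. -/
lemma poly_determined {ι : Type} [Fintype ι] {G : Set (ι → ℝ)} (hG : IsPolyhedron G) :
    ∃ (J : Type) (_ : Fintype J) (Hs : J → Set (ι → ℝ)), (∀ j, IsHalfspace (Hs j)) ∧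
      ∀ x y, (∀ j, x ∈ Hs j ↔ y ∈ Hs j) → x ∈ G → y ∈ G := by
  obtain ⟨k, Ps, hPs, rfl⟩ := hG
  choose m Hs hHs hPeq using hPs
  refine ⟨Σ i : Fin k, Fin (m i), inferInstance, fun j => Hs j.1 j.2, fun j => hHs _ _, ?_⟩
  intro x y hxy hx
  simp only [mem_iUnion] at hx ⊢
  obtain ⟨i, hi⟩ := hx
  refine ⟨i, ?_⟩
  rw [hPeq i] at hi ⊢
  simp only [mem_iInter] at hi ⊢
  intro l
  exact (hxy ⟨i, l⟩).mp (hi l)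

/-- A singleton is a convex polyhedron. -/
lemma isConvexPolyhedron_singleton {n : ℕ} (p : Vec n) : IsConvexPolyhedron {p} := by
  have key : ({p} : Set (Vec n)) =
      ⋂ j : Fin n ⊕ Fin n, Sum.elim
        (fun i => {x : Vec n | (∑ t, (if t = i then (1:ℝ) else 0) * x t) ≤ p i})
        (fun i => {x : Vec n | (∑ t, (if t = i then (-1:ℝ) else 0) * x t) ≤ -(p i)}) j := by
    ext x
    simp only [mem_singleton_iff, mem_iInter]
    constructor
    · rintro rfl j
      rcases j with i | i <;> simp [Finset.sum_ite_eq']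
    · intro hx
      funext i
      have h1 := hx (Sum.inl i)
      have h2 := hx (Sum.inr i)
      simp only [Sum.elim_inl, Sum.elim_inr, mem_setOf_eq] at h1 h2
      simp [ite_mul, Finset.sum_ite_eq'] at h1 h2
      linarith
  rw [key]
  apply isConvexPolyhedron_iInter
  rintro (i | i)
  · exact ⟨fun t => if t = i then 1 else 0, p i, Or.inr rfl⟩
  · exact ⟨fun t => if t = i then -1 else 0, -(p i), Or.inr rfl⟩

/-- Mean value property: the chord slope of a differentiable function whose derivative
remains in a convex polyhedron `F` belongs to `F`. -/
lemma chord_mem {n : ℕ} {F : Set (Vec n)} (hF : IsConvexPolyhedron F) {f : ℝ → Vec n}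
    (hf : Differentiable ℝ f) {s t : ℝ} (hst : s < t)
    (hd : ∀ r, s ≤ r → r ≤ t → deriv f r ∈ F) :
    (t - s)⁻¹ • (f t - f s) ∈ F := by
  obtain ⟨k, Hs, hHs, rfl⟩ := hF
  rw [mem_iInter]
  intro i
  obtain ⟨a, b, hab⟩ := hHs i
  set φ : ℝ → ℝ := fun r => ∑ j, a j * f r j with hφdef
  have hφ : ∀ r : ℝ, HasDerivAt φ (∑ j, a j * deriv f r j) r := by
    intro r
    apply HasDerivAt.fun_sum
    intro j _
    exact ((hasDerivAt_pi.mp (hf r).hasDerivAt) j).const_mul (a j)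
  obtain ⟨ξ, hξmem, hξ⟩ := exists_hasDerivAt_eq_slope φ (fun r => ∑ j, a j * deriv f r j)
    hst (fun r _ => (hφ r).continuousAt.continuousWithinAt) (fun r _ => hφ r)
  have hξF : deriv f ξ ∈ ⋂ i, Hs i := hd ξ hξmem.1.le hξmem.2.le
  have hξi : deriv f ξ ∈ Hs i := by rw [mem_iInter] at hξF; exact hξF i
  have hsum : (∑ j, a j * ((t - s)⁻¹ • (f t - f s)) j) = ∑ j, a j * deriv f ξ j := by
    rw [hξ]
    simp only [Pi.smul_apply, Pi.sub_apply, smul_eq_mul, hφdef]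
    rw [div_eq_inv_mul, ← Finset.sum_sub_distrib, Finset.mul_sum]
    apply Finset.sum_congr rfl
    intro j _; ring
  rcases hab with h | h <;> rw [h] at hξi ⊢ <;> simp only [mem_setOf_eq] at hξi ⊢ <;>
    rw [hsum] <;> exact hξi

theorem rwa_subset_closed {n : ℕ} (F U V W : Set (Vec n))
    (hF : IsConvexPolyhedron F) (hFne : F.Nonempty)
    (hU : IsPolyhedron U) (hV : IsPolyhedron V)
    (hW : IsPolyhedron W) (hUW : U ⊆ W)
    (hcl : ∀ P Q : Set (Vec n), IsConvexPolyhedron P → P ⊆ Vᶜ →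
      IsConvexPolyhedron Q → Q ⊆ W →
      P ∩ preflow F (bnd P Q ∩ preflow F Q) ⊆ W) :
    rwaSet F U V ⊆ W := by
  classical
  obtain ⟨JU, hJUft, HsU, hHsU, hdU⟩ := poly_determined hU
  obtain ⟨JV, hJVft, HsV, hHsV, hdV⟩ := poly_determined hV
  obtain ⟨JW, hJWft, HsW, hHsW, hdW⟩ := poly_determined hW
  letI := hJUft; letI := hJVft; letI := hJWft
  let J := (JU ⊕ (JV ⊕ JW))
  let Hs : J → Set (Vec n) := Sum.elim HsU (Sum.elim HsV HsW)
  have hHs : ∀ j, IsHalfspace (Hs j) := by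
    rintro (j | j | j)
    · exact hHsU j
    · exact hHsV j
    · exact hHsW j
  -- the cell of a point: all points with the same membership pattern
  let cell : Vec n → Set (Vec n) := fun x => ⋂ j, if x ∈ Hs j then Hs j else (Hs j)ᶜ
  have hcellmem : ∀ x y, y ∈ cell x ↔ ∀ j, (y ∈ Hs j ↔ x ∈ Hs j) := by
    intro x y
    simp only [cell, mem_iInter]
    constructor
    · intro h j
      have hj := h j
      by_cases hx : x ∈ Hs j
      · rw [if_pos hx] at hj; exact ⟨fun _ => hx, fun _ => hj⟩
      · rw [if_neg hx] at hj; exact ⟨fun hy => absurd hy hj, fun hx' => absurd hx' hx⟩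
    · intro h j
      by_cases hx : x ∈ Hs j
      · rw [if_pos hx]; exact (h j).mpr hx
      · rw [if_neg hx]; exact fun hy => hx ((h j).mp hy)
  have hcellself : ∀ x, x ∈ cell x := fun x => (hcellmem x x).mpr (fun _ => Iff.rfl)
  have hcellpoly : ∀ x, IsConvexPolyhedron (cell x) := by
    intro x
    apply isConvexPolyhedron_iInter
    intro j
    by_cases hx : x ∈ Hs j
    · rw [if_pos hx]; exact hHs j
    · rw [if_neg hx]; exact isHalfspace_compl (hHs j)
  have hUdet : ∀ x y, y ∈ cell x → x ∈ U → y ∈ U := by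
    intro x y hy hxU
    refine hdU x y (fun j => ?_) hxU
    exact ((hcellmem x y).mp hy (Sum.inl j)).symm
  have hVdet : ∀ x y, y ∈ cell x → x ∈ V → y ∈ V := by
    intro x y hy hxV
    refine hdV x y (fun j => ?_) hxV
    exact ((hcellmem x y).mp hy (Sum.inr (Sum.inl j))).symm
  have hWdet : ∀ x y, y ∈ cell x → x ∈ W → y ∈ W := by
    intro x y hy hxW
    refine hdW x y (fun j => ?_) hxW
    exact ((hcellmem x y).mp hy (Sum.inr (Sum.inr j))).symm
  have hcellsymm : ∀ x y, y ∈ cell x → x ∈ cell y := by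
    intro x y hy
    exact (hcellmem y x).mpr (fun j => ((hcellmem x y).mp hy j).symm)
  -- the pattern function
  let ptn : Vec n → (J → Bool) := fun x j => decide (x ∈ Hs j)
  have hptn_mem : ∀ x y, ptn y = ptn x → y ∈ cell x := by
    intro x y h
    exact (hcellmem x y).mpr (fun j => decide_eq_decide.mp (congrFun h j))
  -- the trajectory
  intro u hu
  obtain ⟨f, hdiff, hf0, hderiv, δ, hδ0, hfδU, havoid⟩ := hu
  set A : Set ℝ := {t : ℝ | 0 ≤ t ∧ t ≤ δ ∧ ∀ s, t ≤ s → s ≤ δ → f s ∈ W} with hA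
  have hδA : δ ∈ A := by
    refine ⟨hδ0, le_refl _, fun s h1 h2 => ?_⟩
    have : s = δ := le_antisymm h2 h1
    rw [this]; exact hUW hfδU
  have hAne : A.Nonempty := ⟨δ, hδA⟩
  have hbdd : BddBelow A := ⟨0, fun a ha => ha.1⟩
  set τ := sInf A with hτ
  have hτ0 : 0 ≤ τ := le_csInf hAne (fun a ha => ha.1)
  have hτδ : τ ≤ δ := csInf_le hbdd hδA
  have h_after : ∀ t, τ < t → t ≤ δ → f t ∈ W := by
    intro t ht htδ
    obtain ⟨a, haA, hat⟩ := exists_lt_of_csInf_lt hAne ht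
    exact haA.2.2 t hat.le htδ
  obtain ⟨c₀, hc₀⟩ := hFne
  -- Step (a): f τ ∈ W
  have hfτW : f τ ∈ W := by
    rcases eq_or_lt_of_le hτδ with heq | hlt
    · rw [heq]; exact hUW hfδU
    · rcases havoid τ hτ0 hlt with hVc | hUm
      swap
      · exact hUW hUm
      -- find a pattern accumulating on the right of τ
      set tk : ℕ → ℝ := fun k => τ + (δ - τ)/((k : ℝ)+1) with htk
      have hk1pos : ∀ k : ℕ, (0:ℝ) < (k : ℝ) + 1 := by
        intro k; positivity
      have htk1 : ∀ k, τ < tk k := by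
        intro k
        have : (0:ℝ) < (δ - τ)/((k : ℝ)+1) := div_pos (sub_pos.mpr hlt) (hk1pos k)
        simp only [htk]; linarith
      have htk2 : ∀ k, tk k ≤ δ := by
        intro k
        have : (δ - τ)/((k : ℝ)+1) ≤ δ - τ := by
          apply div_le_self (sub_pos.mpr hlt).le
          have : (0:ℝ) ≤ (k : ℝ) := Nat.cast_nonneg k
          linarith
        simp only [htk]; linarith
      obtain ⟨p, hp⟩ := Finite.exists_infinite_fiber (fun k => ptn (f (tk k)))
      have hpinf : ((fun k => ptn (f (tk k))) ⁻¹' {p}).Infinite := Set.infinite_coe_iff.mp hp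
      obtain ⟨k₀, hk₀⟩ := hpinf.nonempty
      have hk₀p : ptn (f (tk k₀)) = p := hk₀
      set t₁ := tk k₀ with ht₁
      set Q := cell (f t₁) with hQ
      have hft₁W : f t₁ ∈ W := h_after _ (htk1 k₀) (htk2 k₀)
      have hQW : Q ⊆ W := fun y hy => hWdet _ _ hy hft₁W
      have hclosQ : f τ ∈ closure Q := by
        rw [Metric.mem_closure_iff]
        intro ε hε
        obtain ⟨d, hd, hcont⟩ := Metric.continuousAt_iff.mp (hdiff.continuous.continuousAt) ε hε
        obtain ⟨k, hkmem, hklt⟩ := hpinf.exists_gt ⌈(δ - τ)/d⌉₊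
        have hkp : ptn (f (tk k)) = p := hkmem
        have hdist : dist (tk k) τ < d := by
          have h1 : (δ - τ)/d < (k : ℝ) + 1 := by
            have h2 : (δ - τ)/d ≤ (⌈(δ - τ)/d⌉₊ : ℝ) := Nat.le_ceil _
            have h3 : ((⌈(δ - τ)/d⌉₊ : ℕ) : ℝ) < (k : ℝ) := Nat.cast_lt.mpr hklt
            linarith
          have h4 : (δ - τ) < d * ((k : ℝ) + 1) := by
            have := (div_lt_iff₀ hd).mp h1
            linarith [this]
          have h5 : (δ - τ)/((k : ℝ)+1) < d := by
            rw [div_lt_iff₀ (hk1pos k)]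
            linarith
          have h6 : (0:ℝ) < (δ - τ)/((k : ℝ)+1) := div_pos (sub_pos.mpr hlt) (hk1pos k)
          rw [Real.dist_eq]
          have : tk k - τ = (δ - τ)/((k : ℝ)+1) := by simp only [htk]; ring
          rw [this, abs_of_pos h6]
          exact h5
        refine ⟨f (tk k), ?_, ?_⟩
        · exact hptn_mem _ _ (hkp.trans hk₀p.symm)
        · rw [dist_comm]
          exact hcont hdist
      have hchord : (t₁ - τ)⁻¹ • (f t₁ - f τ) ∈ F :=
        chord_mem hF hdiff (htk1 k₀) (fun r h1 _ => hderiv r (le_trans hτ0 h1))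
      apply hcl {f τ} Q (isConvexPolyhedron_singleton _)
        (singleton_subset_iff.mpr hVc) (hcellpoly _) hQW
      refine ⟨rfl, 0, le_refl 0, c₀, hc₀, ?_⟩
      have hzero : f τ + (0:ℝ) • c₀ = f τ := by simp
      rw [hzero]
      constructor
      · exact Or.inr ⟨rfl, hclosQ⟩
      · refine ⟨t₁ - τ, (sub_pos.mpr (htk1 k₀)).le, _, hchord, ?_⟩
        have heq2 : f τ + (t₁ - τ) • ((t₁ - τ)⁻¹ • (f t₁ - f τ)) = f t₁ := by
          rw [smul_smul, mul_inv_cancel₀ (ne_of_gt (sub_pos.mpr (htk1 k₀))), one_smul]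
          abel
        rw [heq2]
        exact hcellself _
  -- Step (b): τ = 0
  have hτeq : τ = 0 := by
    by_contra hne
    have hpos : 0 < τ := lt_of_le_of_ne hτ0 (Ne.symm hne)
    set bad : (J → Bool) → Prop :=
      fun p => ∃ ε, 0 < ε ∧ ∀ t, τ - ε < t → t < τ → ptn (f t) ≠ p with hbad
    let εf : (J → Bool) → ℝ := fun p => if h : bad p then h.choose else 1
    have hεfpos : ∀ p, 0 < εf p := by
      intro p
      simp only [εf]
      split_ifs with h
      · exact h.choose_spec.1
      · norm_num
    have hεfbad : ∀ p, bad p → ∀ t, τ - εf p < t → t < τ → ptn (f t) ≠ p := by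
      intro p hb
      simp only [εf, dif_pos hb]
      exact hb.choose_spec.2
    have hne' : (Finset.univ : Finset (J → Bool)).Nonempty := Finset.univ_nonempty
    set ε₀ := min τ (Finset.univ.inf' hne' εf) with hε₀
    have hε₀pos : 0 < ε₀ :=
      lt_min hpos ((Finset.lt_inf'_iff hne').mpr (fun p _ => hεfpos p))
    have hε₀τ : ε₀ ≤ τ := min_le_left _ _
    have hε₀f : ∀ p, ε₀ ≤ εf p :=
      fun p => le_trans (min_le_right _ _) (Finset.inf'_le _ (Finset.mem_univ p))
    have hL : ∀ s, τ - ε₀ < s → s < τ → f s ∈ W := by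
      intro s hs1 hs2
      have hs0 : 0 ≤ s := by linarith
      have hsδ : s < δ := lt_of_lt_of_le hs2 hτδ
      rcases havoid s hs0 hsδ with hVc | hUm
      swap
      · exact hUW hUm
      have hgood : ¬ bad (ptn (f s)) := by
        intro hb
        exact hεfbad _ hb s (by linarith [hε₀f (ptn (f s))]) hs2 rfl
      have hrec : ∀ ε, 0 < ε → ∃ t, τ - ε < t ∧ t < τ ∧ ptn (f t) = ptn (f s) := by
        intro ε hε
        by_contra hcon
        push_neg at hcon
        exact hgood ⟨ε, hε, hcon⟩
      set P := cell (f s) with hP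
      have hPVc : P ⊆ Vᶜ := by
        intro y hy hyV
        exact hVc (hVdet y (f s) (hcellsymm _ _ hy) hyV)
      have hclosP : f τ ∈ closure P := by
        rw [Metric.mem_closure_iff]
        intro ε hε
        obtain ⟨d, hd, hcont⟩ := Metric.continuousAt_iff.mp (hdiff.continuous.continuousAt) ε hε
        obtain ⟨t, ht1, ht2, ht3⟩ := hrec d hd
        refine ⟨f t, hptn_mem _ _ ht3, ?_⟩
        rw [dist_comm]
        apply hcont
        rw [Real.dist_eq, abs_of_neg (by linarith : t - τ < 0)]
        linarith
      have hchord : (τ - s)⁻¹ • (f τ - f s) ∈ F :=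
        chord_mem hF hdiff hs2 (fun r h1 _ => hderiv r (le_trans hs0 h1))
      apply hcl P {f τ} (hcellpoly _) hPVc (isConvexPolyhedron_singleton _)
        (singleton_subset_iff.mpr hfτW)
      refine ⟨hcellself _, τ - s, (sub_pos.mpr hs2).le, _, hchord, ?_⟩
      have heq2 : f s + (τ - s) • ((τ - s)⁻¹ • (f τ - f s)) = f τ := by
        rw [smul_smul, mul_inv_cancel₀ (ne_of_gt (sub_pos.mpr hs2)), one_smul]
        abel
      rw [heq2]
      constructor
      · exact Or.inl ⟨hclosP, rfl⟩
      · refine ⟨0, le_refl 0, c₀, hc₀, ?_⟩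
        simp
    set s₀ := τ - ε₀/2 with hs₀
    have hs₀A : s₀ ∈ A := by
      refine ⟨by simp only [hs₀]; linarith, by simp only [hs₀]; linarith, fun s h1 h2 => ?_⟩
      rcases lt_trichotomy s τ with h | h | h
      · exact hL s (by simp only [hs₀] at h1; linarith) h
      · rw [h]; exact hfτW
      · exact h_after s h h2
    have : τ ≤ s₀ := csInf_le hbdd hs₀A
    simp only [hs₀] at this
    linarith
  rw [← hf0, ← hτeq]
  exact hfτW
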